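/- Let X : ℤ² → ℝ⁴ be a discrete surface with edges F(n,m) = X(n+1,m) − X(n,m) and G(n,m) = X(n,m+1) − X(n,m). Suppose X is non-degenerate (F(n,m) and G(n,m) are linearly independent over ℝ at every point), isotropic for Q(v) = v₁² + v₂² + v₃² − v₄² (Q(F(n,m)) = 0 = Q(G(n,m)) for all (n,m)), and satisfies the monotonicity condition F₄(n,m) > 0 and G₄(n,m) > 0 for all (n,m). Then there exist functions φ₁, φ₂, ψ₁, ψ₂ : ℤ² → ℂ and α, β : ℤ² → ℂ such that at every point and for i = 1,2: φᵢ(n,m+1) = α·φᵢ + β·ψᵢ, ψᵢ(n+1,m) = conj(β)·φᵢ + conj(α)·ψᵢ, |α|² − |β|² = 1, and F(n,m) = (Re(φ₁·conj(φ₂)), −Im(φ₁·conj(φ₂)), (|φ₁|² − |φ₂|²)/2, (|φ₁|² + |φ₂|²)/2), with G(n,m) given by the same formulas with ψ₁, ψ₂ in place of φ₁, φ₂. -/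

import Mathlib

open Complex

local notation "conj'" => starRingEnd ℂ

noncomputable def intProd (w : ℤ → ℂ) : ℤ → ℂ := fun m =>
  if 0 ≤ m then ∏ k ∈ Finset.range m.toNat, w k
  else (∏ k ∈ Finset.range (-m).toNat, w (-(k : ℤ) - 1))⁻¹

lemma intProd_succ (w : ℤ → ℂ) (hw : ∀ k, w k ≠ 0) (m : ℤ) :
    intProd w (m + 1) = intProd w m * w m := by
  unfold intProd
  rcases le_or_gt 0 m with hm | hm
  · rw [if_pos hm, if_pos (by omega)]
    have h1 : (m + 1).toNat = m.toNat + 1 := by omega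
    rw [h1, Finset.prod_range_succ, Int.toNat_of_nonneg hm]
  · rcases eq_or_lt_of_le (by omega : m + 1 ≤ 0) with h0 | h0
    · have hm1 : m = -1 := by omega
      subst hm1
      norm_num
      exact (inv_mul_cancel₀ (hw (-1))).symm
    · rw [if_neg (by omega), if_neg (by omega)]
      have h1 : (-m).toNat = (-(m + 1)).toNat + 1 := by omega
      rw [h1, Finset.prod_range_succ]
      have h2 : (-((-(m + 1)).toNat : ℤ) - 1) = m := by omega
      rw [h2, mul_inv, inv_mul_cancel_right₀ (hw m)]

lemma intProd_abs (w : ℤ → ℂ) (hw : ∀ k, ‖w k‖ = 1) (m : ℤ) :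
    ‖intProd w m‖ = 1 := by
  unfold intProd
  split
  · rw [norm_prod]
    exact Finset.prod_eq_one fun k _ => hw _
  · rw [norm_inv, norm_prod]
    rw [Finset.prod_eq_one fun k _ => hw _]
    norm_num


noncomputable def dwLift (v : ℝ × ℝ × ℝ × ℝ) : ℂ × ℂ :=
  (Real.sqrt (v.2.2.2 + v.2.2.1),
   if v.2.2.2 + v.2.2.1 = 0 then (Real.sqrt (v.2.2.2 - v.2.2.1) : ℂ)
   else ((v.1 : ℂ) + (v.2.1 : ℂ) * Complex.I) / (Real.sqrt (v.2.2.2 + v.2.2.1) : ℂ))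

lemma dwLift_spec (v : ℝ × ℝ × ℝ × ℝ)
    (hiso : v.1 ^ 2 + v.2.1 ^ 2 + v.2.2.1 ^ 2 - v.2.2.2 ^ 2 = 0)
    (hpos : 0 < v.2.2.2) :
    (dwLift v).1 * conj' (dwLift v).1 = ((v.2.2.2 + v.2.2.1 : ℝ) : ℂ) ∧
    (dwLift v).2 * conj' (dwLift v).2 = ((v.2.2.2 - v.2.2.1 : ℝ) : ℂ) ∧
    (dwLift v).1 * conj' (dwLift v).2 = (v.1 : ℂ) - (v.2.1 : ℂ) * Complex.I := by
  obtain ⟨v1, v2, v3, v4⟩ := v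
  simp only at hiso hpos ⊢
  have hprod : v1 ^ 2 + v2 ^ 2 = (v4 + v3) * (v4 - v3) := by nlinarith
  have ht : 0 ≤ v4 + v3 := by nlinarith [sq_nonneg v1, sq_nonneg v2, sq_nonneg (v4 - v3)]
  have ht' : 0 ≤ v4 - v3 := by nlinarith [sq_nonneg v1, sq_nonneg v2, sq_nonneg (v4 + v3)]
  unfold dwLift
  simp only
  refine ⟨?_, ?_, ?_⟩
  · rw [Complex.conj_ofReal, ← Complex.ofReal_mul, Real.mul_self_sqrt ht]
  · split_ifs with h0
    · rw [Complex.conj_ofReal, ← Complex.ofReal_mul, Real.mul_self_sqrt ht']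
    · rw [Complex.mul_conj]
      have hs : Real.sqrt (v4 + v3) ≠ 0 := by
        simp [Real.sqrt_eq_zero ht]; intro hh; exact h0 hh
      rw [map_div₀, Complex.normSq_add_mul_I]
      have : Complex.normSq ((Real.sqrt (v4 + v3) : ℝ) : ℂ) = v4 + v3 := by
        rw [Complex.normSq_ofReal, Real.mul_self_sqrt ht]
      rw [this]
      rw [show (v1 ^ 2 + v2 ^ 2) / (v4 + v3) = v4 - v3 by
        rw [hprod]; field_simp]
  · split_ifs with h0
    · have h12 : v1 = 0 ∧ v2 = 0 := by
        constructor <;> nlinarith [sq_nonneg v1, sq_nonneg v2]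
      rw [h0, Real.sqrt_zero]
      simp [h12.1, h12.2]
    · have hs : ((Real.sqrt (v4 + v3) : ℝ) : ℂ) ≠ 0 := by
        simp only [ne_eq, Complex.ofReal_eq_zero]
        simp [Real.sqrt_eq_zero ht]; intro hh; exact h0 hh
      rw [map_div₀]
      simp only [map_add, map_mul, Complex.conj_ofReal, Complex.conj_I]
      field_simp
      ring

lemma dwLift_repr (v : ℝ × ℝ × ℝ × ℝ)
    (hiso : v.1 ^ 2 + v.2.1 ^ 2 + v.2.2.1 ^ 2 - v.2.2.2 ^ 2 = 0)
    (hpos : 0 < v.2.2.2) :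
    v = (((dwLift v).1 * conj' (dwLift v).2).re,
         -(((dwLift v).1 * conj' (dwLift v).2).im),
         (‖(dwLift v).1‖ ^ 2 - ‖(dwLift v).2‖ ^ 2) / 2,
         (‖(dwLift v).1‖ ^ 2 + ‖(dwLift v).2‖ ^ 2) / 2) := by
  obtain ⟨s1, s2, s3⟩ := dwLift_spec v hiso hpos
  have h1 : ‖(dwLift v).1‖ ^ 2 = v.2.2.2 + v.2.2.1 := by
    have := s1
    rw [Complex.mul_conj] at this
    rw [Complex.sq_norm]
    exact_mod_cast this
  have h2 : ‖(dwLift v).2‖ ^ 2 = v.2.2.2 - v.2.2.1 := by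
    have := s2
    rw [Complex.mul_conj] at this
    rw [Complex.sq_norm]
    exact_mod_cast this
  have hre : ((dwLift v).1 * conj' (dwLift v).2).re = v.1 := by rw [s3]; simp
  have him : ((dwLift v).1 * conj' (dwLift v).2).im = -v.2.1 := by rw [s3]; simp
  rw [hre, him, h1, h2]
  simp only [Prod.ext_iff]
  refine ⟨trivial, by ring, by ring, by ring⟩

lemma abs_goal (α β : ℂ) (h : α * conj' α - β * conj' β = 1) :
    ‖α‖ ^ 2 - ‖β‖ ^ 2 = 1 := by
  rw [Complex.sq_norm, Complex.sq_norm]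
  rw [Complex.mul_conj, Complex.mul_conj] at h
  exact_mod_cast h

set_option maxHeartbeats 1000000 in
lemma dirac_step (a b c e a1 b1 ct et u u' : ℂ)
    (H1 : a1 * conj' a1 - ct * conj' ct = a * conj' a - c * conj' c)
    (H2 : b1 * conj' b1 - et * conj' et = b * conj' b - e * conj' e)
    (H3 : a1 * conj' b1 - ct * conj' et = a * conj' b - c * conj' e)
    (hD : a * e - b * c ≠ 0)
    (hu : u * conj' u = 1)
    (hu' : u' = u * conj' (((a1 * e - b1 * c) * (a * et - b * ct) -
      (a * b1 - b * a1) * (ct * e - et * c)) / (a * e - b * c) ^ 2)) :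
    ∃ α β : ℂ,
      u' * a1 = α * (u * a) + β * c ∧
      u' * b1 = α * (u * b) + β * e ∧
      ct = conj' β * (u * a) + conj' α * c ∧
      et = conj' β * (u * b) + conj' α * e ∧
      ‖α‖ ^ 2 - ‖β‖ ^ 2 = 1 := by
  have H3c : conj' a1 * b1 - conj' ct * et = conj' a * b - conj' c * e := by
    have := congrArg conj' H3
    simpa [map_sub, map_mul] using this
  have hD2 : conj' a * conj' e - conj' b * conj' c ≠ 0 := by
    intro h
    apply hD
    have := congrArg conj' h
    simpa [map_sub, map_mul] using this
  have hD' : e * a - c * b ≠ 0 := by rwa [mul_comm e, mul_comm c]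
  have hD2' : conj' e * conj' a - conj' c * conj' b ≠ 0 := by
    rwa [mul_comm (conj' e), mul_comm (conj' c)]
  -- P identities (entries of U*JU = J, cleared of denominators)
  have P1 : (a1 * e - b1 * c) * (conj' a1 * conj' e - conj' b1 * conj' c) -
      (a * b1 - b * a1) * (conj' a * conj' b1 - conj' b * conj' a1) =
      (a * e - b * c) * (conj' a * conj' e - conj' b * conj' c) := by
    linear_combination (b1 * conj' b1 - b * conj' b + e * conj' e) * H1 +
      (ct * conj' ct) * H2 + (conj' a * b - conj' c * e - conj' a1 * b1) * H3 +
      (-(ct * conj' et)) * H3c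
  have P2 : (conj' a1 * conj' e - conj' b1 * conj' c) * (ct * e - et * c) -
      (conj' a * conj' b1 - conj' b * conj' a1) * (a * et - b * ct) = 0 := by
    linear_combination (conj' b1 * et) * H1 + (conj' a1 * ct) * H2 +
      (-(conj' a1 * et)) * H3 + (-(conj' b1 * ct)) * H3c
  have P3 : (ct * e - et * c) * (conj' ct * conj' e - conj' et * conj' c) -
      (a * et - b * ct) * (conj' a * conj' et - conj' b * conj' ct) =
      -((a * e - b * c) * (conj' a * conj' e - conj' b * conj' c)) := by
    linear_combination (et * conj' et + b * conj' b - e * conj' e) * H1 +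
      (a1 * conj' a1) * H2 + (-(conj' ct * et) - (conj' a * b - conj' c * e)) * H3 +
      (-(a1 * conj' b1)) * H3c
  -- K identities
  have K2 : ((a1 * e - b1 * c) * (a * et - b * ct) - (a * b1 - b * a1) * (ct * e - et * c)) *
      (conj' a1 * conj' e - conj' b1 * conj' c) =
      (a * et - b * ct) * ((a * e - b * c) * (conj' a * conj' e - conj' b * conj' c)) := by
    linear_combination (a * et - b * ct) * P1 + (-(a * b1 - b * a1)) * P2
  have K1 : ((a1 * e - b1 * c) * (a * et - b * ct) - (a * b1 - b * a1) * (ct * e - et * c)) *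
      (conj' a * conj' b1 - conj' b * conj' a1) =
      (ct * e - et * c) * ((a * e - b * c) * (conj' a * conj' e - conj' b * conj' c)) := by
    linear_combination (ct * e - et * c) * P1 + (-(a1 * e - b1 * c)) * P2
  have K4 : ((a1 * e - b1 * c) * (a * et - b * ct) - (a * b1 - b * a1) * (ct * e - et * c)) *
      ((conj' a1 * conj' e - conj' b1 * conj' c) * (conj' a * conj' et - conj' b * conj' ct) -
       (conj' a * conj' b1 - conj' b * conj' a1) * (conj' ct * conj' e - conj' et * conj' c)) =
      ((a * e - b * c) * (conj' a * conj' e - conj' b * conj' c)) ^ 2 := by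
    linear_combination (conj' a * conj' et - conj' b * conj' ct) * K2 -
      (conj' ct * conj' e - conj' et * conj' c) * K1 -
      ((a * e - b * c) * (conj' a * conj' e - conj' b * conj' c)) * P3
  refine ⟨conj' (((a1 * e - b1 * c) * (a * et - b * ct) -
      (a * b1 - b * a1) * (ct * e - et * c)) / (a * e - b * c) ^ 2) *
      ((a1 * e - b1 * c) / (a * e - b * c)),
    u' * ((a * b1 - b * a1) / (a * e - b * c)), ?_, ?_, ?_, ?_, ?_⟩
  · subst hu'
    simp only [map_div₀, map_mul, map_sub, map_pow, Complex.conj_conj]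
    field_simp
    ring
  · subst hu'
    simp only [map_div₀, map_mul, map_sub, map_pow, Complex.conj_conj]
    field_simp
    ring
  · subst hu'
    simp only [map_div₀, map_mul, map_sub, map_pow, Complex.conj_conj]
    field_simp
    linear_combination (-(a * u * conj' u)) * K1 + (-c) * K2 +
      (-(a * (ct * e - et * c) * ((a * e - b * c) * (conj' a * conj' e - conj' b * conj' c)))) * hu
  · subst hu'
    simp only [map_div₀, map_mul, map_sub, map_pow, Complex.conj_conj]
    field_simp
    linear_combination (-(b * u * conj' u)) * K1 + (-e) * K2 +
      (-(b * (ct * e - et * c) * ((a * e - b * c) * (conj' a * conj' e - conj' b * conj' c)))) * hu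
  · apply abs_goal
    subst hu'
    simp only [map_div₀, map_mul, map_sub, map_pow, Complex.conj_conj]
    field_simp
    linear_combination ((a1 * e - b1 * c) * (conj' a1 * conj' e - conj' b1 * conj' c) -
        u * conj' u * ((a * b1 - b * a1) * (conj' a * conj' b1 - conj' b * conj' a1))) * K4 +
      (-((a * b1 - b * a1) * (conj' a * conj' b1 - conj' b * conj' a1) *
        ((a * e - b * c) * (conj' a * conj' e - conj' b * conj' c)) ^ 2)) * hu +
      (((a * e - b * c) * (conj' a * conj' e - conj' b * conj' c)) ^ 2) * P1

-- Δ ≠ 0 lemma pieces and d_abs test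
lemma d_abs (a b c e a1 b1 ct et : ℂ)
    (H1 : a1 * conj' a1 - ct * conj' ct = a * conj' a - c * conj' c)
    (H2 : b1 * conj' b1 - et * conj' et = b * conj' b - e * conj' e)
    (H3 : a1 * conj' b1 - ct * conj' et = a * conj' b - c * conj' e)
    (hD : a * e - b * c ≠ 0) :
    ‖((a1 * e - b1 * c) * (a * et - b * ct) -
      (a * b1 - b * a1) * (ct * e - et * c)) / (a * e - b * c) ^ 2‖ = 1 := by
  have H3c : conj' a1 * b1 - conj' ct * et = conj' a * b - conj' c * e := by
    have := congrArg conj' H3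
    simpa [map_sub, map_mul] using this
  have P1 : (a1 * e - b1 * c) * (conj' a1 * conj' e - conj' b1 * conj' c) -
      (a * b1 - b * a1) * (conj' a * conj' b1 - conj' b * conj' a1) =
      (a * e - b * c) * (conj' a * conj' e - conj' b * conj' c) := by
    linear_combination (b1 * conj' b1 - b * conj' b + e * conj' e) * H1 +
      (ct * conj' ct) * H2 + (conj' a * b - conj' c * e - conj' a1 * b1) * H3 +
      (-(ct * conj' et)) * H3c
  have P2 : (conj' a1 * conj' e - conj' b1 * conj' c) * (ct * e - et * c) -
      (conj' a * conj' b1 - conj' b * conj' a1) * (a * et - b * ct) = 0 := by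
    linear_combination (conj' b1 * et) * H1 + (conj' a1 * ct) * H2 +
      (-(conj' a1 * et)) * H3 + (-(conj' b1 * ct)) * H3c
  have P3 : (ct * e - et * c) * (conj' ct * conj' e - conj' et * conj' c) -
      (a * et - b * ct) * (conj' a * conj' et - conj' b * conj' ct) =
      -((a * e - b * c) * (conj' a * conj' e - conj' b * conj' c)) := by
    linear_combination (et * conj' et + b * conj' b - e * conj' e) * H1 +
      (a1 * conj' a1) * H2 + (-(conj' ct * et) - (conj' a * b - conj' c * e)) * H3 +
      (-(a1 * conj' b1)) * H3c
  have K2 : ((a1 * e - b1 * c) * (a * et - b * ct) - (a * b1 - b * a1) * (ct * e - et * c)) *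
      (conj' a1 * conj' e - conj' b1 * conj' c) =
      (a * et - b * ct) * ((a * e - b * c) * (conj' a * conj' e - conj' b * conj' c)) := by
    linear_combination (a * et - b * ct) * P1 + (-(a * b1 - b * a1)) * P2
  have K1 : ((a1 * e - b1 * c) * (a * et - b * ct) - (a * b1 - b * a1) * (ct * e - et * c)) *
      (conj' a * conj' b1 - conj' b * conj' a1) =
      (ct * e - et * c) * ((a * e - b * c) * (conj' a * conj' e - conj' b * conj' c)) := by
    linear_combination (ct * e - et * c) * P1 + (-(a1 * e - b1 * c)) * P2
  have K4 : ((a1 * e - b1 * c) * (a * et - b * ct) - (a * b1 - b * a1) * (ct * e - et * c)) *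
      ((conj' a1 * conj' e - conj' b1 * conj' c) * (conj' a * conj' et - conj' b * conj' ct) -
       (conj' a * conj' b1 - conj' b * conj' a1) * (conj' ct * conj' e - conj' et * conj' c)) =
      ((a * e - b * c) * (conj' a * conj' e - conj' b * conj' c)) ^ 2 := by
    linear_combination (conj' a * conj' et - conj' b * conj' ct) * K2 -
      (conj' ct * conj' e - conj' et * conj' c) * K1 -
      ((a * e - b * c) * (conj' a * conj' e - conj' b * conj' c)) * P3
  -- rewrite K4 as N * conj N = ...
  set N := (a1 * e - b1 * c) * (a * et - b * ct) - (a * b1 - b * a1) * (ct * e - et * c) with hN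
  have hcN : (conj' a1 * conj' e - conj' b1 * conj' c) * (conj' a * conj' et - conj' b * conj' ct) -
      (conj' a * conj' b1 - conj' b * conj' a1) * (conj' ct * conj' e - conj' et * conj' c)
      = conj' N := by
    rw [hN]; simp only [map_sub, map_mul]
  rw [hcN] at K4
  have hDc : (a * e - b * c) * conj' (a * e - b * c) =
      (a * e - b * c) * (conj' a * conj' e - conj' b * conj' c) := by
    simp only [map_sub, map_mul]
  rw [← hDc] at K4
  rw [Complex.mul_conj, Complex.mul_conj] at K4
  have hnsq : Complex.normSq N = Complex.normSq (a * e - b * c) ^ 2 := by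
    exact_mod_cast K4
  have hD0 : Complex.normSq (a * e - b * c) ≠ 0 := by
    simpa [Complex.normSq_eq_zero] using hD
  rw [norm_div, norm_pow, Complex.norm_def, Complex.norm_def, hnsq,
    Real.sqrt_sq (Complex.normSq_nonneg _), Real.sq_sqrt (Complex.normSq_nonneg _)]
  exact div_self hD0

set_option maxHeartbeats 1000000 in
theorem discrete_weierstrass_R31_converse
    (X : ℤ × ℤ → ℝ × ℝ × ℝ × ℝ)
    (F G : ℤ × ℤ → ℝ × ℝ × ℝ × ℝ)
    (hF : ∀ n m : ℤ, F (n, m) = X (n + 1, m) - X (n, m))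
    (hG : ∀ n m : ℤ, G (n, m) = X (n, m + 1) - X (n, m))
    (hnondeg : ∀ n m : ℤ, LinearIndependent ℝ ![F (n, m), G (n, m)])
    (hFiso : ∀ n m : ℤ,
      (F (n, m)).1 ^ 2 + (F (n, m)).2.1 ^ 2 + (F (n, m)).2.2.1 ^ 2 - (F (n, m)).2.2.2 ^ 2 = 0)
    (hGiso : ∀ n m : ℤ,
      (G (n, m)).1 ^ 2 + (G (n, m)).2.1 ^ 2 + (G (n, m)).2.2.1 ^ 2 - (G (n, m)).2.2.2 ^ 2 = 0)
    (hFmono : ∀ n m : ℤ, 0 < (F (n, m)).2.2.2)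
    (hGmono : ∀ n m : ℤ, 0 < (G (n, m)).2.2.2) :
    ∃ (φ₁ φ₂ ψ₁ ψ₂ : ℤ × ℤ → ℂ) (α β : ℤ × ℤ → ℂ), ∀ n m : ℤ,
      φ₁ (n, m + 1) = α (n, m) * φ₁ (n, m) + β (n, m) * ψ₁ (n, m) ∧
      φ₂ (n, m + 1) = α (n, m) * φ₂ (n, m) + β (n, m) * ψ₂ (n, m) ∧
      ψ₁ (n + 1, m) =
        (starRingEnd ℂ) (β (n, m)) * φ₁ (n, m) + (starRingEnd ℂ) (α (n, m)) * ψ₁ (n, m) ∧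
      ψ₂ (n + 1, m) =
        (starRingEnd ℂ) (β (n, m)) * φ₂ (n, m) + (starRingEnd ℂ) (α (n, m)) * ψ₂ (n, m) ∧
      ‖α (n, m)‖ ^ 2 - ‖β (n, m)‖ ^ 2 = 1 ∧
      F (n, m) =
        ((φ₁ (n, m) * (starRingEnd ℂ) (φ₂ (n, m))).re,
         -(φ₁ (n, m) * (starRingEnd ℂ) (φ₂ (n, m))).im,
         (‖φ₁ (n, m)‖ ^ 2 - ‖φ₂ (n, m)‖ ^ 2) / 2,
         (‖φ₁ (n, m)‖ ^ 2 + ‖φ₂ (n, m)‖ ^ 2) / 2) ∧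
      G (n, m) =
        ((ψ₁ (n, m) * (starRingEnd ℂ) (ψ₂ (n, m))).re,
         -(ψ₁ (n, m) * (starRingEnd ℂ) (ψ₂ (n, m))).im,
         (‖ψ₁ (n, m)‖ ^ 2 - ‖ψ₂ (n, m)‖ ^ 2) / 2,
         (‖ψ₁ (n, m)‖ ^ 2 + ‖ψ₂ (n, m)‖ ^ 2) / 2) := by
  classical
  -- Δ ≠ 0 at every point
  have hDel : ∀ n m : ℤ,
      (dwLift (F (n, m))).1 * (dwLift (G (n, m))).2 -
      (dwLift (F (n, m))).2 * (dwLift (G (n, m))).1 ≠ 0 := by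
    intro n m hzero
    obtain ⟨sF1, sF2, sF3⟩ := dwLift_spec (F (n, m)) (hFiso n m) (hFmono n m)
    obtain ⟨sG1, sG2, sG3⟩ := dwLift_spec (G (n, m)) (hGiso n m) (hGmono n m)
    set a := (dwLift (F (n, m))).1 with ha_def
    set b := (dwLift (F (n, m))).2 with hb_def
    set c := (dwLift (G (n, m))).1 with hc_def
    set e := (dwLift (G (n, m))).2 with he_def
    have hLI := hnondeg n m
    rw [linearIndependent_fin2] at hLI
    simp only [Matrix.cons_val_one, Matrix.head_cons, Matrix.cons_val_zero] at hLI
    obtain ⟨hG0, hsm⟩ := hLI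
    have hab : a ≠ 0 ∨ b ≠ 0 := by
      by_contra hcon
      push_neg at hcon
      obtain ⟨haz, hbz⟩ := hcon
      rw [haz, zero_mul] at sF1
      rw [hbz, zero_mul] at sF2
      have h1 : (F (n, m)).2.2.2 + (F (n, m)).2.2.1 = 0 := by exact_mod_cast sF1.symm
      have h2 : (F (n, m)).2.2.2 - (F (n, m)).2.2.1 = 0 := by exact_mod_cast sF2.symm
      have := hFmono n m
      linarith
    obtain ⟨lam, hceq, heeq⟩ : ∃ lam : ℂ, c = lam * a ∧ e = lam * b := by
      rcases hab with hx | hx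
      · refine ⟨c / a, by field_simp, ?_⟩
        field_simp
        linear_combination hzero
      · refine ⟨e / b, ?_, by field_simp⟩
        field_simp
        linear_combination -hzero
    have hnl : c * conj' e = (Complex.normSq lam : ℂ) * (a * conj' b) := by
      rw [hceq, heeq, map_mul, ← Complex.mul_conj]
      ring
    rw [sG3, sF3] at hnl
    have hre : (G (n, m)).1 = Complex.normSq lam * (F (n, m)).1 := by
      have := congrArg Complex.re hnl
      simpa using this
    have him : (G (n, m)).2.1 = Complex.normSq lam * (F (n, m)).2.1 := by
      have := congrArg Complex.im hnl
      simp at this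
      linarith
    have hcc : c * conj' c = (Complex.normSq lam : ℂ) * (a * conj' a) := by
      rw [hceq, map_mul, ← Complex.mul_conj]
      ring
    rw [sG1, sF1] at hcc
    have hplus : (G (n, m)).2.2.2 + (G (n, m)).2.2.1 =
        Complex.normSq lam * ((F (n, m)).2.2.2 + (F (n, m)).2.2.1) := by exact_mod_cast hcc
    have hee : e * conj' e = (Complex.normSq lam : ℂ) * (b * conj' b) := by
      rw [heeq, map_mul, ← Complex.mul_conj]
      ring
    rw [sG2, sF2] at hee
    have hminus : (G (n, m)).2.2.2 - (G (n, m)).2.2.1 =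
        Complex.normSq lam * ((F (n, m)).2.2.2 - (F (n, m)).2.2.1) := by exact_mod_cast hee
    have h3 : (G (n, m)).2.2.1 = Complex.normSq lam * (F (n, m)).2.2.1 := by linarith
    have h4 : (G (n, m)).2.2.2 = Complex.normSq lam * (F (n, m)).2.2.2 := by linarith
    have hGF : G (n, m) = Complex.normSq lam • F (n, m) := by
      have hsmul : Complex.normSq lam • F (n, m) =
          (Complex.normSq lam * (F (n, m)).1, Complex.normSq lam * (F (n, m)).2.1,
           Complex.normSq lam * (F (n, m)).2.2.1, Complex.normSq lam * (F (n, m)).2.2.2) := rfl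
      rw [hsmul]
      simp only [Prod.ext_iff]
      exact ⟨hre, him, h3, h4⟩
    rcases eq_or_ne (Complex.normSq lam) 0 with h0 | h0
    · exact hG0 (by rw [hGF, h0, zero_smul])
    · exact hsm (Complex.normSq lam)⁻¹ (by rw [hGF, smul_smul, inv_mul_cancel₀ h0, one_smul])
  -- the compatibility (Hirota-type) equations
  have hH : ∀ n m : ℤ,
      ((dwLift (F (n, m + 1))).1 * conj' (dwLift (F (n, m + 1))).1 -
        (dwLift (G (n + 1, m))).1 * conj' (dwLift (G (n + 1, m))).1 =
       (dwLift (F (n, m))).1 * conj' (dwLift (F (n, m))).1 -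
        (dwLift (G (n, m))).1 * conj' (dwLift (G (n, m))).1) ∧
      ((dwLift (F (n, m + 1))).2 * conj' (dwLift (F (n, m + 1))).2 -
        (dwLift (G (n + 1, m))).2 * conj' (dwLift (G (n + 1, m))).2 =
       (dwLift (F (n, m))).2 * conj' (dwLift (F (n, m))).2 -
        (dwLift (G (n, m))).2 * conj' (dwLift (G (n, m))).2) ∧
      ((dwLift (F (n, m + 1))).1 * conj' (dwLift (F (n, m + 1))).2 -
        (dwLift (G (n + 1, m))).1 * conj' (dwLift (G (n + 1, m))).2 =
       (dwLift (F (n, m))).1 * conj' (dwLift (F (n, m))).2 -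
        (dwLift (G (n, m))).1 * conj' (dwLift (G (n, m))).2) := by
    intro n m
    have hcomp : F (n, m + 1) + G (n, m) = G (n + 1, m) + F (n, m) := by
      rw [hF n (m + 1), hG (n + 1) m, hG n m, hF n m]
      abel
    have c1 : (F (n, m + 1)).1 + (G (n, m)).1 = (G (n + 1, m)).1 + (F (n, m)).1 := by
      have := congrArg (fun v : ℝ × ℝ × ℝ × ℝ => v.1) hcomp
      simpa using this
    have c2 : (F (n, m + 1)).2.1 + (G (n, m)).2.1 = (G (n + 1, m)).2.1 + (F (n, m)).2.1 := by
      have := congrArg (fun v : ℝ × ℝ × ℝ × ℝ => v.2.1) hcomp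
      simpa using this
    have c3 : (F (n, m + 1)).2.2.1 + (G (n, m)).2.2.1 =
        (G (n + 1, m)).2.2.1 + (F (n, m)).2.2.1 := by
      have := congrArg (fun v : ℝ × ℝ × ℝ × ℝ => v.2.2.1) hcomp
      simpa using this
    have c4 : (F (n, m + 1)).2.2.2 + (G (n, m)).2.2.2 =
        (G (n + 1, m)).2.2.2 + (F (n, m)).2.2.2 := by
      have := congrArg (fun v : ℝ × ℝ × ℝ × ℝ => v.2.2.2) hcomp
      simpa using this
    obtain ⟨sF1', sF2', sF3'⟩ := dwLift_spec (F (n, m + 1)) (hFiso n (m + 1)) (hFmono n (m + 1))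
    obtain ⟨sG1', sG2', sG3'⟩ := dwLift_spec (G (n + 1, m)) (hGiso (n + 1) m) (hGmono (n + 1) m)
    obtain ⟨sF1, sF2, sF3⟩ := dwLift_spec (F (n, m)) (hFiso n m) (hFmono n m)
    obtain ⟨sG1, sG2, sG3⟩ := dwLift_spec (G (n, m)) (hGiso n m) (hGmono n m)
    have c1C : ((F (n, m + 1)).1 : ℂ) + ((G (n, m)).1 : ℂ) =
        ((G (n + 1, m)).1 : ℂ) + ((F (n, m)).1 : ℂ) := by exact_mod_cast c1
    have c2C : ((F (n, m + 1)).2.1 : ℂ) + ((G (n, m)).2.1 : ℂ) =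
        ((G (n + 1, m)).2.1 : ℂ) + ((F (n, m)).2.1 : ℂ) := by exact_mod_cast c2
    have c3C : ((F (n, m + 1)).2.2.1 : ℂ) + ((G (n, m)).2.2.1 : ℂ) =
        ((G (n + 1, m)).2.2.1 : ℂ) + ((F (n, m)).2.2.1 : ℂ) := by exact_mod_cast c3
    have c4C : ((F (n, m + 1)).2.2.2 : ℂ) + ((G (n, m)).2.2.2 : ℂ) =
        ((G (n + 1, m)).2.2.2 : ℂ) + ((F (n, m)).2.2.2 : ℂ) := by exact_mod_cast c4
    refine ⟨?_, ?_, ?_⟩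
    · rw [sF1', sG1', sF1, sG1]
      push_cast
      linear_combination c3C + c4C
    · rw [sF2', sG2', sF2, sG2]
      push_cast
      linear_combination c4C - c3C
    · rw [sF3', sG3', sF3, sG3]
      linear_combination c1C - Complex.I * c2C
  -- the gauge function
  set DD : ℤ × ℤ → ℂ := fun p =>
    (((dwLift (F (p.1, p.2 + 1))).1 * (dwLift (G p)).2 -
      (dwLift (F (p.1, p.2 + 1))).2 * (dwLift (G p)).1) *
     ((dwLift (F p)).1 * (dwLift (G (p.1 + 1, p.2))).2 -
      (dwLift (F p)).2 * (dwLift (G (p.1 + 1, p.2))).1) -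
     ((dwLift (F p)).1 * (dwLift (F (p.1, p.2 + 1))).2 -
      (dwLift (F p)).2 * (dwLift (F (p.1, p.2 + 1))).1) *
     ((dwLift (G (p.1 + 1, p.2))).1 * (dwLift (G p)).2 -
      (dwLift (G (p.1 + 1, p.2))).2 * (dwLift (G p)).1)) /
    ((dwLift (F p)).1 * (dwLift (G p)).2 - (dwLift (F p)).2 * (dwLift (G p)).1) ^ 2
    with hDD
  have hdabs : ∀ n m : ℤ, ‖DD (n, m)‖ = 1 := by
    intro n m
    obtain ⟨H1, H2, H3⟩ := hH n m
    rw [hDD]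
    exact d_abs _ _ _ _ _ _ _ _ H1 H2 H3 (hDel n m)
  have hdne : ∀ n m : ℤ, DD (n, m) ≠ 0 := by
    intro n m h0
    have := hdabs n m
    rw [h0] at this
    simp at this
  set U : ℤ × ℤ → ℂ := fun p => intProd (fun m' => conj' (DD (p.1, m'))) p.2 with hU
  have hUsucc : ∀ n m : ℤ, U (n, m + 1) = U (n, m) * conj' (DD (n, m)) := by
    intro n m
    rw [hU]
    exact intProd_succ _ (fun k => by
      rw [starRingEnd_apply]
      exact star_ne_zero.mpr (hdne n k)) m
  have hUabs : ∀ p : ℤ × ℤ, U p * conj' (U p) = 1 := by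
    intro p
    have habs : ‖U p‖ = 1 := by
      rw [hU]
      exact intProd_abs _ (fun k => by rw [Complex.norm_conj]; exact hdabs p.1 k) p.2
    rw [Complex.mul_conj]
    rw [← Complex.sq_norm, habs]
    norm_num
  -- pointwise existence of the Dirac transition coefficients
  have hex : ∀ n m : ℤ, ∃ α β : ℂ,
      U (n, m + 1) * (dwLift (F (n, m + 1))).1 =
        α * (U (n, m) * (dwLift (F (n, m))).1) + β * (dwLift (G (n, m))).1 ∧
      U (n, m + 1) * (dwLift (F (n, m + 1))).2 =
        α * (U (n, m) * (dwLift (F (n, m))).2) + β * (dwLift (G (n, m))).2 ∧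
      (dwLift (G (n + 1, m))).1 =
        conj' β * (U (n, m) * (dwLift (F (n, m))).1) + conj' α * (dwLift (G (n, m))).1 ∧
      (dwLift (G (n + 1, m))).2 =
        conj' β * (U (n, m) * (dwLift (F (n, m))).2) + conj' α * (dwLift (G (n, m))).2 ∧
      ‖α‖ ^ 2 - ‖β‖ ^ 2 = 1 := by
    intro n m
    obtain ⟨H1, H2, H3⟩ := hH n m
    refine dirac_step _ _ _ _ _ _ _ _ _ _ H1 H2 H3 (hDel n m) (hUabs (n, m)) ?_
    rw [hUsucc n m, hDD]
  choose A B hAB using hex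
  refine ⟨fun p => U p * (dwLift (F p)).1, fun p => U p * (dwLift (F p)).2,
    fun p => (dwLift (G p)).1, fun p => (dwLift (G p)).2,
    fun p => A p.1 p.2, fun p => B p.1 p.2, ?_⟩
  intro n m
  obtain ⟨e1, e2, e3, e4, e5⟩ := hAB n m
  have hUa : ‖U (n, m)‖ = 1 := by
    rw [hU]
    exact intProd_abs _ (fun k => by rw [Complex.norm_conj]; exact hdabs n k) m
  have hc : (U (n, m) * (dwLift (F (n, m))).1) * conj' (U (n, m) * (dwLift (F (n, m))).2) =
      (dwLift (F (n, m))).1 * conj' ((dwLift (F (n, m))).2) := by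
    rw [map_mul]
    linear_combination ((dwLift (F (n, m))).1 * conj' ((dwLift (F (n, m))).2)) * hUabs (n, m)
  have ha1 : ‖U (n, m) * (dwLift (F (n, m))).1‖ =
      ‖(dwLift (F (n, m))).1‖ := by rw [norm_mul, hUa, one_mul]
  have ha2 : ‖U (n, m) * (dwLift (F (n, m))).2‖ =
      ‖(dwLift (F (n, m))).2‖ := by rw [norm_mul, hUa, one_mul]
  refine ⟨e1, e2, e3, e4, e5, ?_, ?_⟩
  · simp only [hc, ha1, ha2]
    exact dwLift_repr (F (n, m)) (hFiso n m) (hFmono n m)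
  · exact dwLift_repr (G (n, m)) (hGiso n m) (hGmono n m)
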